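/- arXiv:2605.25698 — 3 statements merged into one kernel-verified Lean document; each statement's English description precedes it below -/
import Mathlib

section
/- Let β > 1 and s > 0. Then there exist constants c₁, c₂ > 0 and t₀ > 0 such that for all t ≥ t₀, c₁·t^{−s} ≤ Σ_{j=1}^∞ j^{−(1+sβ)} e^{−2 j^{−β} t} ≤ c₂·t^{−s}. -/
/-- Telescoping step: `a * (y+1)^(-(1+a)) ≤ y^(-a) - (y+1)^(-a)` for `a > 0`, `y ≥ 1`. -/
lemma aux_step (a y : ℝ) (ha : 0 < a) (hy : 1 ≤ y) :
    a * (y + 1) ^ (-(1 + a)) ≤ y ^ (-a) - (y + 1) ^ (-a) := by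
  have hy0 : 0 < y := lt_of_lt_of_le one_pos hy
  have hz : 0 < y + 1 := by linarith
  have hw : 0 < y / (y + 1) := div_pos hy0 hz
  have hlog : Real.log (y / (y + 1)) ≤ y / (y + 1) - 1 := Real.log_le_sub_one_of_pos hw
  have h1 : (y / (y + 1)) ^ a ≤ Real.exp (a * (y / (y + 1) - 1)) := by
    rw [Real.rpow_def_of_pos hw]
    exact Real.exp_le_exp.mpr (by nlinarith)
  have h2 : 1 + a / (y + 1) ≤ Real.exp (a / (y + 1)) := by
    have := Real.add_one_le_exp (a / (y + 1)); linarith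
  have hq : a * (y / (y + 1) - 1) + a / (y + 1) = 0 := by field_simp; ring
  have key : (y / (y + 1)) ^ a * (1 + a / (y + 1)) ≤ 1 := by
    calc (y / (y + 1)) ^ a * (1 + a / (y + 1))
        ≤ Real.exp (a * (y / (y + 1) - 1)) * Real.exp (a / (y + 1)) :=
          mul_le_mul h1 h2 (by positivity) (Real.exp_pos _).le
      _ = Real.exp (a * (y / (y + 1) - 1) + a / (y + 1)) := (Real.exp_add _ _).symm
      _ = 1 := by rw [hq, Real.exp_zero]
  have hwa : 0 < (y / (y + 1)) ^ a := Real.rpow_pos_of_pos hw a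
  have key2 : 1 + a / (y + 1) ≤ (y / (y + 1)) ^ (-a) := by
    rw [Real.rpow_neg hw.le, inv_eq_one_div, le_div_iff₀ hwa]
    nlinarith
  have hsplit : y ^ (-a) = (y / (y + 1)) ^ (-a) * (y + 1) ^ (-a) := by
    rw [← Real.mul_rpow (le_of_lt hw) hz.le]
    congr 1
    field_simp
  have hza : 0 < (y + 1) ^ (-a) := Real.rpow_pos_of_pos hz _
  have hmain : (1 + a / (y + 1)) * (y + 1) ^ (-a) ≤ y ^ (-a) := by
    rw [hsplit]; exact mul_le_mul_of_nonneg_right key2 hza.le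
  have hpow : (y + 1) ^ (-a) * (a / (y + 1)) = a * (y + 1) ^ (-(1 + a)) := by
    have h1a : (y + 1) ^ (-(1 + a)) = (y + 1) ^ (-a) * (y + 1)⁻¹ := by
      rw [show -(1 + a) = -a + -1 by ring, Real.rpow_add hz, Real.rpow_neg_one]
    rw [h1a]; field_simp
  nlinarith [hmain, hpow]

/-- Tail bound: `∑_{j=N+1}^{K-1} j^(-(1+a)) ≤ N^(-a) / a` for `a > 0`, `N ≥ 1`. -/
lemma aux_tail (a : ℝ) (ha : 0 < a) (N K : ℕ) (hN : 1 ≤ N) :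
    ∑ j ∈ Finset.Ico (N + 1) K, ((j : ℝ)) ^ (-(1 + a)) ≤ (N : ℝ) ^ (-a) * a⁻¹ := by
  set h : ℕ → ℝ := fun m => ((m : ℝ)) ^ (-a) with hh
  have hterm : ∀ j ∈ Finset.Ico (N + 1) K,
      ((j : ℝ)) ^ (-(1 + a)) ≤ a⁻¹ * (h (j - 1) - h j) := by
    intro j hj
    obtain ⟨hj1, _⟩ := Finset.mem_Ico.mp hj
    have hj2 : 2 ≤ j := by omega
    have hy : (1 : ℝ) ≤ ((j - 1 : ℕ) : ℝ) := by
      have : 1 ≤ j - 1 := by omega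
      exact_mod_cast this
    have hcast : (((j - 1 : ℕ)) : ℝ) + 1 = (j : ℝ) := by
      have : (j - 1) + 1 = j := by omega
      exact_mod_cast this
    have hstep := aux_step a ((j - 1 : ℕ) : ℝ) ha hy
    rw [hcast] at hstep
    have : a * (j : ℝ) ^ (-(1 + a)) ≤ h (j - 1) - h j := hstep
    calc ((j : ℝ)) ^ (-(1 + a)) = a⁻¹ * (a * (j : ℝ) ^ (-(1 + a))) := by
          field_simp
      _ ≤ a⁻¹ * (h (j - 1) - h j) := by
          exact mul_le_mul_of_nonneg_left this (inv_nonneg.mpr ha.le)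
  calc ∑ j ∈ Finset.Ico (N + 1) K, ((j : ℝ)) ^ (-(1 + a))
      ≤ ∑ j ∈ Finset.Ico (N + 1) K, a⁻¹ * (h (j - 1) - h j) := Finset.sum_le_sum hterm
    _ = a⁻¹ * ∑ j ∈ Finset.Ico (N + 1) K, (h (j - 1) - h j) := by rw [Finset.mul_sum]
    _ ≤ a⁻¹ * h N := by
        apply mul_le_mul_of_nonneg_left _ (inv_nonneg.mpr ha.le)
        rw [Finset.sum_Ico_eq_sum_range]
        have hre : ∀ k, h (N + 1 + k - 1) - h (N + 1 + k) = (fun i => h (N + i)) k - (fun i => h (N + i)) (k + 1) := by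
          intro k
          have e1 : N + 1 + k - 1 = N + k := by omega
          have e2 : N + 1 + k = N + (k + 1) := by omega
          rw [e1, e2]
        calc ∑ k ∈ Finset.range (K - (N + 1)), (h (N + 1 + k - 1) - h (N + 1 + k))
            = ∑ k ∈ Finset.range (K - (N + 1)), ((fun i => h (N + i)) k - (fun i => h (N + i)) (k + 1)) := by
              exact Finset.sum_congr rfl fun k _ => hre k
          _ = h (N + 0) - h (N + (K - (N + 1))) := Finset.sum_range_sub' _ _
          _ ≤ h N := by
              have : 0 ≤ h (N + (K - (N + 1))) := Real.rpow_nonneg (Nat.cast_nonneg _) _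
              simpa using by linarith [this]
    _ = (N : ℝ) ^ (-a) * a⁻¹ := by rw [mul_comm]


set_option maxHeartbeats 1000000 in
/-- Bias-term asymptotic: for `β > 1` and `s > 0`, the sum
`Σ_{j≥1} j^{-(1+sβ)} e^{-2 j^{-β} t}` is of exact order `t^{-s}` for large `t`. -/
theorem stmt_10 (β s : ℝ) (hβ : 1 < β) (hs : 0 < s) :
    ∃ c₁ c₂ t₀ : ℝ, 0 < c₁ ∧ 0 < c₂ ∧ 0 < t₀ ∧ ∀ t : ℝ, t₀ ≤ t →
      c₁ * t ^ (-s)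
        ≤ ∑' j : ℕ+, ((j : ℝ) ^ (-(1 + s * β)) * Real.exp (-2 * (j : ℝ) ^ (-β) * t)) ∧
      (∑' j : ℕ+, ((j : ℝ) ^ (-(1 + s * β)) * Real.exp (-2 * (j : ℝ) ^ (-β) * t)))
        ≤ c₂ * t ^ (-s) := by
  have hβ0 : (0 : ℝ) < β := by linarith
  have ha : 0 < s * β := mul_pos hs hβ0
  set n : ℕ := ⌈s⌉₊ + 1 with hn_def
  have hns : s + 1 ≤ (n : ℝ) := by
    have := Nat.le_ceil s
    push_cast [hn_def]
    linarith
  set e : ℝ := β * n - (1 + s * β) with he_def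
  have he0 : 0 < e := by nlinarith
  have hfac : (0 : ℝ) < n.factorial := by exact_mod_cast n.factorial_pos
  refine ⟨Real.exp (-2) * 4 ^ (-(1 + s * β)),
    4 * (n.factorial : ℝ) / 2 ^ n * 2 ^ e + (s * β)⁻¹, 1, by positivity, by positivity,
    one_pos, ?_⟩
  intro t ht
  have ht0 : (0 : ℝ) < t := lt_of_lt_of_le one_pos ht
  set T : ℝ := t ^ (β⁻¹) with hT_def
  have hT1 : 1 ≤ T := by
    have h := Real.rpow_le_rpow zero_le_one ht (by positivity : (0:ℝ) ≤ β⁻¹)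
    simpa [hT_def] using h
  have hT0 : 0 < T := lt_of_lt_of_le one_pos hT1
  set N : ℕ := ⌈T⌉₊ with hN_def
  have hN1 : 1 ≤ N := Nat.one_le_ceil_iff.mpr hT0
  have hTN : T ≤ (N : ℝ) := Nat.le_ceil T
  have hNT : (N : ℝ) ≤ 2 * T := by
    have := Nat.ceil_lt_add_one hT0.le
    have : (N : ℝ) < T + 1 := by exact_mod_cast this
    linarith
  -- rpow facts
  have hTb : T ^ (-β) * t = 1 := by
    rw [hT_def, ← Real.rpow_mul ht0.le]
    have hmul : β⁻¹ * -β = -1 := by field_simp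
    rw [hmul, Real.rpow_neg_one]
    exact inv_mul_cancel₀ ht0.ne'
  have hts : T ^ (-(s * β)) = t ^ (-s) := by
    rw [hT_def, ← Real.rpow_mul ht0.le]
    congr 1
    field_simp
  -- the summand over ℕ
  set F : ℕ → ℝ := fun j => (j : ℝ) ^ (-(1 + s * β)) * Real.exp (-2 * (j : ℝ) ^ (-β) * t)
    with hF_def
  have hF0 : ∀ j, 0 ≤ F j := fun j => by
    rw [hF_def]
    positivity
  have hFle : ∀ j : ℕ, F j ≤ (j : ℝ) ^ (-(1 + s * β)) := by
    intro j
    rw [hF_def]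
    have h1 : Real.exp (-2 * (j : ℝ) ^ (-β) * t) ≤ 1 := by
      rw [Real.exp_le_one_iff]
      have h2 : 0 ≤ (j : ℝ) ^ (-β) := Real.rpow_nonneg (Nat.cast_nonneg j) _
      nlinarith
    exact mul_le_of_le_one_right (Real.rpow_nonneg (Nat.cast_nonneg j) _) h1
  have hsum : Summable F :=
    Summable.of_nonneg_of_le hF0 hFle
      (Real.summable_nat_rpow.mpr (by linarith))
  have hconv : (∑' j : ℕ+, ((j : ℝ) ^ (-(1 + s * β)) * Real.exp (-2 * (j : ℝ) ^ (-β) * t)))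
      = ∑' j : ℕ, F j := by
    refine PNat.coe_injective.tsum_eq (f := F) ?_
    intro x hx
    rcases Nat.eq_zero_or_pos x with rfl | hx0
    · exfalso
      apply hx
      rw [hF_def]
      simp only [Nat.cast_zero]
      rw [Real.zero_rpow (by nlinarith : -(1 + s * β) ≠ 0)]
      ring
    · exact ⟨⟨x, hx0⟩, rfl⟩
  rw [hconv]
  constructor
  · -- lower bound
    have hterm : ∀ j ∈ Finset.Ioc N (2 * N),
        Real.exp (-2) * (4 * T) ^ (-(1 + s * β)) ≤ F j := by
      intro j hj
      obtain ⟨h1, h2⟩ := Finset.mem_Ioc.mp hj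
      have hj0 : (0 : ℝ) < j := by
        have : 0 < j := by omega
        exact_mod_cast this
      have hjT : T ≤ (j : ℝ) := by
        have : (N : ℝ) ≤ (j : ℝ) := by exact_mod_cast h1.le
        linarith
      have hj4T : (j : ℝ) ≤ 4 * T := by
        have : (j : ℝ) ≤ 2 * (N : ℝ) := by exact_mod_cast h2
        linarith
      have f1 : (4 * T) ^ (-(1 + s * β)) ≤ (j : ℝ) ^ (-(1 + s * β)) :=
        Real.rpow_le_rpow_of_nonpos hj0 hj4T (by nlinarith)
      have f2 : Real.exp (-2) ≤ Real.exp (-2 * (j : ℝ) ^ (-β) * t) := by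
        apply Real.exp_le_exp.mpr
        have hrp : (j : ℝ) ^ (-β) ≤ T ^ (-β) :=
          Real.rpow_le_rpow_of_nonpos hT0 hjT (by linarith)
        have := mul_le_mul_of_nonneg_right hrp ht0.le
        nlinarith [hTb]
      rw [hF_def]
      calc Real.exp (-2) * (4 * T) ^ (-(1 + s * β))
          = (4 * T) ^ (-(1 + s * β)) * Real.exp (-2) := by ring
        _ ≤ (j : ℝ) ^ (-(1 + s * β)) * Real.exp (-2 * (j : ℝ) ^ (-β) * t) :=
            mul_le_mul f1 f2 (Real.exp_pos _).le (Real.rpow_nonneg hj0.le _)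
    have hcard : (Finset.Ioc N (2 * N)).card = N := by rw [Nat.card_Ioc]; omega
    have hsum_lb : (N : ℝ) * (Real.exp (-2) * (4 * T) ^ (-(1 + s * β)))
        ≤ ∑ j ∈ Finset.Ioc N (2 * N), F j := by
      have h := Finset.card_nsmul_le_sum (Finset.Ioc N (2 * N)) F _ hterm
      rw [hcard] at h
      simpa [nsmul_eq_mul] using h
    have hsub : ∑ j ∈ Finset.Ioc N (2 * N), F j ≤ ∑' j, F j :=
      Summable.sum_le_tsum _ (fun i _ => hF0 i) hsum
    have h4T : (4 * T) ^ (-(1 + s * β)) = 4 ^ (-(1 + s * β)) * T ^ (-(1 + s * β)) :=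
      Real.mul_rpow (by norm_num) hT0.le
    have hTTp : T * T ^ (-(1 + s * β)) = t ^ (-s) := by
      have h1 : T ^ (1 : ℝ) * T ^ (-(1 + s * β)) = T ^ (-(s * β)) := by
        rw [← Real.rpow_add hT0]
        ring_nf
      rw [← hts, ← h1, Real.rpow_one]
    have hx : 0 ≤ Real.exp (-2) * 4 ^ (-(1 + s * β)) * T ^ (-(1 + s * β)) := by positivity
    calc Real.exp (-2) * 4 ^ (-(1 + s * β)) * t ^ (-s)
        = Real.exp (-2) * 4 ^ (-(1 + s * β)) * T ^ (-(1 + s * β)) * T := by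
          rw [← hTTp]; ring
      _ ≤ Real.exp (-2) * 4 ^ (-(1 + s * β)) * T ^ (-(1 + s * β)) * N :=
          mul_le_mul_of_nonneg_left hTN hx
      _ = (N : ℝ) * (Real.exp (-2) * (4 * T) ^ (-(1 + s * β))) := by rw [h4T]; ring
      _ ≤ ∑ j ∈ Finset.Ioc N (2 * N), F j := hsum_lb
      _ ≤ ∑' j, F j := hsub
  · -- upper bound
    -- head termwise bound
    set D : ℝ := (n.factorial : ℝ) / 2 ^ n * t ^ (-(n : ℝ)) with hD_def
    have hD0 : 0 ≤ D := by rw [hD_def]; positivity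
    have hhead_term : ∀ j : ℕ, j ≤ N → F j ≤ D * (j : ℝ) ^ e := by
      intro j hjN
      rcases Nat.eq_zero_or_pos j with rfl | hj0n
      · have : F 0 = 0 := by
          rw [hF_def]
          simp only [Nat.cast_zero]
          rw [Real.zero_rpow (by nlinarith : -(1 + s * β) ≠ 0)]
          ring
        rw [this]
        positivity
      · have hj0 : (0 : ℝ) < j := by exact_mod_cast hj0n
        set x : ℝ := 2 * (j : ℝ) ^ (-β) * t with hx_def
        have hjb : 0 < (j : ℝ) ^ (-β) := Real.rpow_pos_of_pos hj0 _
        have hx0 : 0 < x := by rw [hx_def]; positivity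
        have hxn : 0 < x ^ n / n.factorial := by positivity
        have hexp : Real.exp (-x) ≤ (n.factorial : ℝ) / x ^ n := by
          have h := Real.pow_div_factorial_le_exp x hx0.le n
          rw [Real.exp_neg]
          calc (Real.exp x)⁻¹ ≤ (x ^ n / n.factorial)⁻¹ := by
                apply inv_anti₀ hxn h
            _ = (n.factorial : ℝ) / x ^ n := by rw [inv_div]
        have hxpow : x ^ n = 2 ^ n * (j : ℝ) ^ (-β * n) * t ^ n := by
          rw [hx_def, mul_pow, mul_pow, ← Real.rpow_natCast ((j : ℝ) ^ (-β)) n,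
            ← Real.rpow_mul hj0.le]
        have hjpow : (j : ℝ) ^ (-(1 + s * β)) * (j : ℝ) ^ (β * n) = (j : ℝ) ^ e := by
          rw [← Real.rpow_add hj0, he_def]
          ring_nf
        have hFx : F j = (j : ℝ) ^ (-(1 + s * β)) * Real.exp (-x) := by
          rw [hF_def, hx_def]
          simp only [neg_mul]
        have hstep : F j ≤ (j : ℝ) ^ (-(1 + s * β)) * ((n.factorial : ℝ) / x ^ n) := by
          rw [hFx]
          exact mul_le_mul_of_nonneg_left hexp (Real.rpow_nonneg hj0.le _)
        refine hstep.trans_eq ?_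
        rw [hxpow, hD_def, ← hjpow]
        have hbn : 0 < (j : ℝ) ^ (-β * (n : ℝ)) := Real.rpow_pos_of_pos hj0 _
        have hbninv : ((j : ℝ) ^ (-β * (n : ℝ)))⁻¹ = (j : ℝ) ^ (β * (n : ℝ)) := by
          rw [← Real.rpow_neg hj0.le]
          ring_nf
        have htn : t ^ (-(n : ℝ)) = (t ^ n)⁻¹ := by
          rw [Real.rpow_neg ht0.le, Real.rpow_natCast]
        rw [htn]
        field_simp
        rw [← hbninv]
        field_simp
    have hhead : ∑ j ∈ Finset.range (N + 1), F j
        ≤ 4 * (n.factorial : ℝ) / 2 ^ n * 2 ^ e * t ^ (-s) := by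
      have hb : ∀ j ∈ Finset.range (N + 1), F j ≤ D * (N : ℝ) ^ e := by
        intro j hj
        have hjN : j ≤ N := by
          have := Finset.mem_range.mp hj
          omega
        refine (hhead_term j hjN).trans ?_
        have : (j : ℝ) ^ e ≤ (N : ℝ) ^ e :=
          Real.rpow_le_rpow (Nat.cast_nonneg j) (by exact_mod_cast hjN) he0.le
        exact mul_le_mul_of_nonneg_left this hD0
      have h1 : ∑ j ∈ Finset.range (N + 1), F j ≤ ((N : ℝ) + 1) * (D * (N : ℝ) ^ e) := by
        have := Finset.sum_le_card_nsmul (Finset.range (N + 1)) F _ hb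
        rw [Finset.card_range] at this
        rw [nsmul_eq_mul] at this
        push_cast at this
        linarith
      refine h1.trans ?_
      have hN4T : (N : ℝ) + 1 ≤ 4 * T := by
        have h1N : (1 : ℝ) ≤ (N : ℝ) := by exact_mod_cast hN1
        linarith
      have hNe : (N : ℝ) ^ e ≤ 2 ^ e * T ^ e := by
        rw [← Real.mul_rpow (by norm_num) hT0.le]
        exact Real.rpow_le_rpow (Nat.cast_nonneg N) hNT he0.le
      have hTe : T * T ^ e * t ^ (-(n : ℝ)) = t ^ (-s) := by
        have h1 : T ^ (1 : ℝ) * T ^ e = T ^ (1 + e) := (Real.rpow_add hT0 _ _).symm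
        have h2 : T ^ (1 + e) = t ^ ((n : ℝ) - s) := by
          rw [hT_def, ← Real.rpow_mul ht0.le]
          congr 1
          rw [he_def]
          field_simp
          ring
        have h3 : t ^ ((n : ℝ) - s) * t ^ (-(n : ℝ)) = t ^ (-s) := by
          rw [← Real.rpow_add ht0]
          ring_nf
        calc T * T ^ e * t ^ (-(n : ℝ)) = T ^ (1 : ℝ) * T ^ e * t ^ (-(n : ℝ)) := by
              rw [Real.rpow_one]
          _ = t ^ ((n : ℝ) - s) * t ^ (-(n : ℝ)) := by rw [h1, h2]
          _ = t ^ (-s) := h3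
      calc ((N : ℝ) + 1) * (D * (N : ℝ) ^ e)
          ≤ (4 * T) * (D * (2 ^ e * T ^ e)) := by
            apply mul_le_mul hN4T (mul_le_mul_of_nonneg_left hNe hD0)
              (by positivity) (by positivity)
        _ = 4 * (n.factorial : ℝ) / 2 ^ n * 2 ^ e * (T * T ^ e * t ^ (-(n : ℝ))) := by
            rw [hD_def]; ring
        _ = 4 * (n.factorial : ℝ) / 2 ^ n * 2 ^ e * t ^ (-s) := by rw [hTe]
    -- now bound arbitrary finset sums
    apply Summable.tsum_le_of_sum_le hsum
    intro S
    set M : ℕ := S.sup id with hM_def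
    have hSsub : S ⊆ Finset.range (N + 1) ∪ Finset.Ico (N + 1) (M + 1) := by
      intro j hj
      have hjM : j ≤ M := Finset.le_sup (f := id) hj
      simp only [Finset.mem_union, Finset.mem_range, Finset.mem_Ico]
      omega
    have hdisj : Disjoint (Finset.range (N + 1)) (Finset.Ico (N + 1) (M + 1)) := by
      rw [Finset.disjoint_left]
      intro j hj1 hj2
      simp only [Finset.mem_range] at hj1
      simp only [Finset.mem_Ico] at hj2
      omega
    have h1 : ∑ j ∈ S, F j
        ≤ ∑ j ∈ Finset.range (N + 1) ∪ Finset.Ico (N + 1) (M + 1), F j :=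
      Finset.sum_le_sum_of_subset_of_nonneg hSsub (fun j _ _ => hF0 j)
    rw [Finset.sum_union hdisj] at h1
    have htail : ∑ j ∈ Finset.Ico (N + 1) (M + 1), F j ≤ (s * β)⁻¹ * t ^ (-s) := by
      have h2 : ∑ j ∈ Finset.Ico (N + 1) (M + 1), F j
          ≤ ∑ j ∈ Finset.Ico (N + 1) (M + 1), ((j : ℝ)) ^ (-(1 + s * β)) :=
        Finset.sum_le_sum (fun j _ => hFle j)
      have h3 := aux_tail (s * β) ha N (M + 1) hN1
      have h4 : (N : ℝ) ^ (-(s * β)) ≤ t ^ (-s) := by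
        rw [← hts]
        exact Real.rpow_le_rpow_of_nonpos hT0 hTN (by nlinarith)
      calc ∑ j ∈ Finset.Ico (N + 1) (M + 1), F j
          ≤ (N : ℝ) ^ (-(s * β)) * (s * β)⁻¹ := h2.trans h3
        _ ≤ t ^ (-s) * (s * β)⁻¹ :=
            mul_le_mul_of_nonneg_right h4 (inv_nonneg.mpr ha.le)
        _ = (s * β)⁻¹ * t ^ (-s) := by ring
    calc ∑ j ∈ S, F j
        ≤ ∑ j ∈ Finset.range (N + 1), F j + ∑ j ∈ Finset.Ico (N + 1) (M + 1), F j := h1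
      _ ≤ 4 * (n.factorial : ℝ) / 2 ^ n * 2 ^ e * t ^ (-s) + (s * β)⁻¹ * t ^ (-s) :=
          add_le_add hhead htail
      _ = (4 * (n.factorial : ℝ) / 2 ^ n * 2 ^ e + (s * β)⁻¹) * t ^ (-s) := by ring
end

section
/- Let β > 1. Then there exist constants c₁, c₂ > 0 and t₀ > 0 such that for all t ≥ t₀, c₁·t^{−(2−1/β)} ≤ Σ_{j=1}^∞ j^{−2β} e^{−2 j^{−β} t} ≤ c₂·t^{−(2−1/β)}. -/
private lemma aux_exp_sq (u : ℝ) (hu : 0 < u) : Real.exp (-(2 * u)) ≤ (u ^ 2)⁻¹ := by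
  rw [Real.exp_neg]
  apply inv_anti₀ (by positivity)
  calc u ^ 2 ≤ (u + 1) ^ 2 := by nlinarith
    _ ≤ (Real.exp u) ^ 2 := by
        have := Real.add_one_le_exp u
        nlinarith [Real.exp_pos u]
    _ = Real.exp (2 * u) := by rw [← Real.exp_nat_mul]; norm_num [mul_comm]

set_option maxHeartbeats 1600000 in
/-- Kernel asymptotic: for `β > 1`, the sum `Σ_{j≥1} j^{-2β} e^{-2 j^{-β} t}`
is of exact order `t^{-(2-1/β)}` for large `t`. -/
theorem stmt_11 (β : ℝ) (hβ : 1 < β) :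
    ∃ c₁ c₂ t₀ : ℝ, 0 < c₁ ∧ 0 < c₂ ∧ 0 < t₀ ∧ ∀ t : ℝ, t₀ ≤ t →
      c₁ * t ^ (-(2 - 1 / β))
        ≤ ∑' j : ℕ+, ((j : ℝ) ^ (-(2 * β)) * Real.exp (-2 * (j : ℝ) ^ (-β) * t)) ∧
      (∑' j : ℕ+, ((j : ℝ) ^ (-(2 * β)) * Real.exp (-2 * (j : ℝ) ^ (-β) * t)))
        ≤ c₂ * t ^ (-(2 - 1 / β)) := by
  have hβ0 : (0:ℝ) < β := by linarith
  refine ⟨Real.exp (-2) * 4 ^ (-(2*β)), 3, 1, by positivity, by norm_num, one_pos, ?_⟩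
  intro t ht
  have ht0 : (0:ℝ) < t := by linarith
  set f : ℕ → ℝ := fun n => ((n:ℝ)+1) ^ (-(2*β)) * Real.exp (-2 * ((n:ℝ)+1) ^ (-β) * t)
    with hfdef
  -- rewrite the PNat tsum as a tsum over ℕ
  have hEq : (∑' j : ℕ+, ((j : ℝ) ^ (-(2 * β)) * Real.exp (-2 * (j : ℝ) ^ (-β) * t)))
      = ∑' n : ℕ, f n := by
    rw [← Equiv.tsum_eq Equiv.pnatEquivNat.symm
      (fun j : ℕ+ => ((j : ℝ) ^ (-(2 * β)) * Real.exp (-2 * (j : ℝ) ^ (-β) * t)))]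
    refine tsum_congr fun n => ?_
    have hc : ((Equiv.pnatEquivNat.symm n : ℕ+) : ℝ) = (n:ℝ) + 1 := by
      simp [Equiv.pnatEquivNat, Nat.succPNat]
    rw [hfdef]
    dsimp only
    rw [hc]
  rw [hEq]
  -- basic positivity facts about `f`
  have hjpos : ∀ n : ℕ, (0:ℝ) < (n:ℝ) + 1 := fun n => by positivity
  have hfnonneg : ∀ n : ℕ, 0 ≤ f n := fun n =>
    mul_nonneg (Real.rpow_nonneg (hjpos n).le _) (Real.exp_pos _).le
  have hfle : ∀ n : ℕ, f n ≤ ((n:ℝ)+1) ^ (-(2*β)) := by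
    intro n
    rw [hfdef]
    dsimp only
    have hx : Real.exp (-2 * ((n:ℝ)+1) ^ (-β) * t) ≤ 1 := by
      rw [Real.exp_le_one_iff]
      have h1 : 0 ≤ ((n:ℝ)+1) ^ (-β) := Real.rpow_nonneg (hjpos n).le _
      nlinarith
    exact mul_le_of_le_one_right (Real.rpow_nonneg (hjpos n).le _) hx
  -- summability
  have hsum0 : Summable (fun n : ℕ => ((n:ℝ)+1) ^ (-(2*β))) := by
    have h1 : Summable (fun n : ℕ => (n:ℝ) ^ (-(2*β))) :=
      Real.summable_nat_rpow.mpr (by linarith)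
    have h2 := h1.comp_injective Nat.succ_injective
    refine h2.congr fun n => ?_
    simp [Function.comp, Nat.succ_eq_add_one]
  have hsum : Summable f :=
    Summable.of_nonneg_of_le hfnonneg hfle hsum0
  -- the cut point N
  set N : ℕ := ⌈t ^ β⁻¹⌉₊ with hNdef
  have htb : (1:ℝ) ≤ t ^ β⁻¹ := Real.one_le_rpow ht (by positivity)
  have hNt : t ^ β⁻¹ ≤ (N:ℝ) := Nat.le_ceil _
  have hN1 : (1:ℝ) ≤ (N:ℝ) := by linarith
  have hNpos : (0:ℝ) < (N:ℝ) := by linarith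
  have hN2 : (N:ℝ) ≤ 2 * t ^ β⁻¹ := by
    have := Nat.ceil_lt_add_one (by positivity : (0:ℝ) ≤ t ^ β⁻¹)
    rw [hNdef]
    linarith
  -- exponent identities
  have hXt : t ^ (-(2 - 1/β)) = t ^ β⁻¹ * t ^ (-2:ℝ) := by
    rw [← Real.rpow_add ht0]
    congr 1
    rw [one_div]
    ring
  have hTpow : (t ^ β⁻¹) ^ (-(2*β)) = t ^ (-2:ℝ) := by
    rw [← Real.rpow_mul ht0.le]
    congr 1
    field_simp
  have hT2 : t ^ (-2:ℝ) = (t^2)⁻¹ := by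
    rw [show (-2:ℝ) = -(2:ℕ) by norm_num, Real.rpow_neg ht0.le, Real.rpow_natCast]
  have hT2pos : (0:ℝ) < t ^ (-2:ℝ) := Real.rpow_pos_of_pos ht0 _
  -- ===== Lower bound =====
  have hlb : Real.exp (-2) * 4 ^ (-(2*β)) * t ^ (-(2 - 1/β)) ≤ ∑' n, f n := by
    have hterm : ∀ n ∈ Finset.Ico N (2*N),
        Real.exp (-2) * (4 ^ (-(2*β)) * t ^ (-2:ℝ)) ≤ f n := by
      intro n hn
      rw [Finset.mem_Ico] at hn
      have hn1 : t ^ β⁻¹ ≤ (n:ℝ) + 1 := by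
        have : (N:ℝ) ≤ (n:ℝ) := by exact_mod_cast hn.1
        linarith
      have hn2 : (n:ℝ) + 1 ≤ 4 * t ^ β⁻¹ := by
        have h : (n:ℝ) + 1 ≤ 2 * (N:ℝ) := by exact_mod_cast Nat.succ_le_of_lt hn.2
        linarith
      have hp1 : 4 ^ (-(2*β)) * t ^ (-2:ℝ) ≤ ((n:ℝ)+1) ^ (-(2*β)) := by
        have h4 : ((4:ℝ) * t ^ β⁻¹) ^ (-(2*β)) = 4 ^ (-(2*β)) * t ^ (-2:ℝ) := by
          rw [Real.mul_rpow (by norm_num) (by positivity), hTpow]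
        rw [← h4]
        exact Real.rpow_le_rpow_of_nonpos (hjpos n) hn2 (by linarith)
      have hp2 : Real.exp (-2) ≤ Real.exp (-2 * ((n:ℝ)+1) ^ (-β) * t) := by
        apply Real.exp_le_exp.mpr
        have h1 : ((n:ℝ)+1) ^ (-β) ≤ (t ^ β⁻¹) ^ (-β) :=
          Real.rpow_le_rpow_of_nonpos (by positivity) hn1 (by linarith)
        have h2 : (t ^ β⁻¹) ^ (-β) = t⁻¹ := by
          rw [← Real.rpow_mul ht0.le, show β⁻¹ * (-β) = -1 by field_simp,
            Real.rpow_neg_one]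
        rw [h2] at h1
        have h3 : ((n:ℝ)+1) ^ (-β) * t ≤ 1 := by
          calc ((n:ℝ)+1) ^ (-β) * t ≤ t⁻¹ * t := mul_le_mul_of_nonneg_right h1 ht0.le
            _ = 1 := inv_mul_cancel₀ ht0.ne'
        nlinarith [Real.rpow_nonneg (hjpos n).le (-β)]
      calc Real.exp (-2) * (4 ^ (-(2*β)) * t ^ (-2:ℝ))
          ≤ Real.exp (-2 * ((n:ℝ)+1) ^ (-β) * t) * (((n:ℝ)+1) ^ (-(2*β))) :=
            mul_le_mul hp2 hp1 (by positivity) (Real.exp_pos _).le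
        _ = f n := by rw [hfdef]; dsimp only; ring
    have hcard : (Finset.Ico N (2*N)).card = N := by
      rw [Nat.card_Ico]
      omega
    have hsumge : (N:ℝ) * (Real.exp (-2) * (4 ^ (-(2*β)) * t ^ (-2:ℝ)))
        ≤ ∑ n ∈ Finset.Ico N (2*N), f n := by
      have h := Finset.card_nsmul_le_sum (Finset.Ico N (2*N)) f _ hterm
      rw [hcard, nsmul_eq_mul] at h
      exact h
    have hfin : ∑ n ∈ Finset.Ico N (2*N), f n ≤ ∑' n, f n :=
      Summable.sum_le_tsum _ (fun n _ => hfnonneg n) hsum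
    calc Real.exp (-2) * 4 ^ (-(2*β)) * t ^ (-(2 - 1/β))
        = t ^ β⁻¹ * (Real.exp (-2) * (4 ^ (-(2*β)) * t ^ (-2:ℝ))) := by rw [hXt]; ring
      _ ≤ (N:ℝ) * (Real.exp (-2) * (4 ^ (-(2*β)) * t ^ (-2:ℝ))) :=
          mul_le_mul_of_nonneg_right hNt (by positivity)
      _ ≤ ∑ n ∈ Finset.Ico N (2*N), f n := hsumge
      _ ≤ ∑' n, f n := hfin
  -- ===== Upper bound =====
  have hub : ∑' n, f n ≤ 3 * t ^ (-(2 - 1/β)) := by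
    have hsplit := Summable.sum_add_tsum_nat_add N hsum
    -- head bound
    have hhead : ∑ i ∈ Finset.range N, f i ≤ (N:ℝ) * t ^ (-2:ℝ) := by
      have hterm : ∀ i ∈ Finset.range N, f i ≤ t ^ (-2:ℝ) := by
        intro i _
        have hj : (0:ℝ) < (i:ℝ) + 1 := hjpos i
        have hu : (0:ℝ) < ((i:ℝ)+1) ^ (-β) * t := by positivity
        have he : Real.exp (-2 * ((i:ℝ)+1) ^ (-β) * t)
            ≤ ((((i:ℝ)+1) ^ (-β) * t) ^ 2)⁻¹ := by
          have h := aux_exp_sq (((i:ℝ)+1) ^ (-β) * t) hu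
          rw [show -2 * ((i:ℝ)+1) ^ (-β) * t = -(2 * (((i:ℝ)+1) ^ (-β) * t)) by ring]
          exact h
        have hsq : (((i:ℝ)+1) ^ (-β)) ^ 2 = ((i:ℝ)+1) ^ (-(2*β)) := by
          rw [← Real.rpow_natCast (((i:ℝ)+1) ^ (-β)) 2, ← Real.rpow_mul hj.le]
          norm_num
          ring_nf
        have hppos : (0:ℝ) < ((i:ℝ)+1) ^ (-(2*β)) := Real.rpow_pos_of_pos hj _
        calc f i ≤ ((i:ℝ)+1) ^ (-(2*β)) * ((((i:ℝ)+1) ^ (-β) * t) ^ 2)⁻¹ := by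
              rw [hfdef]
              dsimp only
              exact mul_le_mul_of_nonneg_left he (Real.rpow_nonneg hj.le _)
          _ = t ^ (-2:ℝ) := by
              rw [mul_pow, hsq, hT2, mul_inv]
              rw [← mul_assoc, mul_inv_cancel₀ hppos.ne']
              ring
      calc ∑ i ∈ Finset.range N, f i ≤ ∑ i ∈ Finset.range N, t ^ (-2:ℝ) :=
            Finset.sum_le_sum hterm
        _ = (N:ℝ) * t ^ (-2:ℝ) := by
            rw [Finset.sum_const, Finset.card_range, nsmul_eq_mul]
    -- tail bound
    have htail : ∑' n, f (n + N) ≤ (N:ℝ) ^ ((1:ℝ) - 2*β) := by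
      apply Real.tsum_le_of_sum_range_le (fun n => hfnonneg _)
      intro M
      set g : ℕ → ℝ := fun m => ((m:ℝ) + N)⁻¹ with hgdef
      have hstep : ∀ n : ℕ, f (n + N) ≤ (N:ℝ) ^ ((2:ℝ) - 2*β) * (g n - g (n+1)) := by
        intro n
        have hx : (0:ℝ) < (n:ℝ) + (N:ℝ) + 1 := by linarith
        have ha : (0:ℝ) < (n:ℝ) + (N:ℝ) := by linarith
        have hcast : ((n + N : ℕ):ℝ) + 1 = (n:ℝ) + (N:ℝ) + 1 := by push_cast; ring
        have h1 : f (n + N) ≤ ((n:ℝ) + (N:ℝ) + 1) ^ (-(2*β)) := by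
          have := hfle (n + N)
          rwa [hcast] at this
        have h2 : ((n:ℝ) + (N:ℝ) + 1) ^ (-(2*β))
            = ((n:ℝ) + (N:ℝ) + 1) ^ ((2:ℝ) - 2*β) * ((n:ℝ) + (N:ℝ) + 1) ^ (-2:ℝ) := by
          rw [← Real.rpow_add hx]
          congr 1
          ring
        have h3 : ((n:ℝ) + (N:ℝ) + 1) ^ ((2:ℝ) - 2*β) ≤ (N:ℝ) ^ ((2:ℝ) - 2*β) :=
          Real.rpow_le_rpow_of_nonpos hNpos (by linarith) (by linarith)
        have h4 : ((n:ℝ) + (N:ℝ) + 1) ^ (-2:ℝ) ≤ g n - g (n+1) := by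
          have hxx : ((n:ℝ) + (N:ℝ) + 1) ^ (-2:ℝ) = (((n:ℝ) + (N:ℝ) + 1)^2)⁻¹ := by
            rw [show (-2:ℝ) = -(2:ℕ) by norm_num, Real.rpow_neg hx.le, Real.rpow_natCast]
          have hgg : g n - g (n+1) = (((n:ℝ) + (N:ℝ)) * ((n:ℝ) + (N:ℝ) + 1))⁻¹ := by
            rw [hgdef]
            dsimp only
            push_cast
            rw [inv_sub_inv ha.ne' (by linarith : ((n:ℝ) + 1 + (N:ℝ)) ≠ 0)]
            rw [show (n:ℝ) + 1 + (N:ℝ) - ((n:ℝ) + (N:ℝ)) = 1 by ring, one_div]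
            congr 1
            ring
          rw [hxx, hgg]
          apply inv_anti₀ (by positivity)
          nlinarith
        calc f (n + N) ≤ ((n:ℝ) + (N:ℝ) + 1) ^ (-(2*β)) := h1
          _ = ((n:ℝ) + (N:ℝ) + 1) ^ ((2:ℝ) - 2*β) * ((n:ℝ) + (N:ℝ) + 1) ^ (-2:ℝ) := h2
          _ ≤ (N:ℝ) ^ ((2:ℝ) - 2*β) * (g n - g (n+1)) := by
              apply mul_le_mul h3 h4 (Real.rpow_pos_of_pos hx _).le
                (Real.rpow_nonneg hNpos.le _)
      calc ∑ n ∈ Finset.range M, f (n + N)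
          ≤ ∑ n ∈ Finset.range M, (N:ℝ) ^ ((2:ℝ) - 2*β) * (g n - g (n+1)) :=
            Finset.sum_le_sum fun n _ => hstep n
        _ = (N:ℝ) ^ ((2:ℝ) - 2*β) * (g 0 - g M) := by
            rw [← Finset.mul_sum, Finset.sum_range_sub' g M]
        _ ≤ (N:ℝ) ^ ((2:ℝ) - 2*β) * (N:ℝ)⁻¹ := by
            have hg0 : g 0 = (N:ℝ)⁻¹ := by rw [hgdef]; norm_num
            have hgM : 0 ≤ g M := by rw [hgdef]; positivity
            have := Real.rpow_nonneg hNpos.le ((2:ℝ) - 2*β)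
            nlinarith
        _ = (N:ℝ) ^ ((1:ℝ) - 2*β) := by
            rw [← Real.rpow_neg_one (N:ℝ), ← Real.rpow_add hNpos]
            congr 1
            ring
    -- combine
    have htail2 : (N:ℝ) ^ ((1:ℝ) - 2*β) ≤ t ^ β⁻¹ * t ^ (-2:ℝ) := by
      have h1 : (N:ℝ) ^ ((1:ℝ) - 2*β) ≤ (t ^ β⁻¹) ^ ((1:ℝ) - 2*β) :=
        Real.rpow_le_rpow_of_nonpos (by positivity) hNt (by linarith)
      have h2 : (t ^ β⁻¹) ^ ((1:ℝ) - 2*β) = t ^ β⁻¹ * t ^ (-2:ℝ) := by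
        rw [← Real.rpow_mul ht0.le, ← Real.rpow_add ht0]
        congr 1
        have hb : β⁻¹ * β = 1 := inv_mul_cancel₀ hβ0.ne'
        linear_combination (-2:ℝ) * hb
      linarith
    have hhead2 : (N:ℝ) * t ^ (-2:ℝ) ≤ 2 * (t ^ β⁻¹ * t ^ (-2:ℝ)) := by
      nlinarith
    calc ∑' n, f n = ∑ i ∈ Finset.range N, f i + ∑' n, f (n + N) := hsplit.symm
      _ ≤ (N:ℝ) * t ^ (-2:ℝ) + (N:ℝ) ^ ((1:ℝ) - 2*β) := add_le_add hhead htail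
      _ ≤ 2 * (t ^ β⁻¹ * t ^ (-2:ℝ)) + t ^ β⁻¹ * t ^ (-2:ℝ) := add_le_add hhead2 htail2
      _ = 3 * t ^ (-(2 - 1/β)) := by rw [hXt]; ring
  exact ⟨hlb, hub⟩
end

section
/- Let 0 < a₀ < a₁, 0 < c₁ < c₀, and B > 0. For i ∈ {0,1}, define Φ_i(w) = min over b ≥ B of (c_i·w/b + a_i·b) for w > 0. Then the ratio R(w) = Φ₁(w)/Φ₀(w) is nonincreasing on (0,∞); moreover R(w) → a₁/a₀ > 1 as w → 0⁺ and R(w) → √(a₁c₁/(a₀c₀)) as w → ∞, and R is constant equal to √(a₁c₁/(a₀c₀)) on [a₁B²/c₁, ∞). -/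
open Filter Topology

lemma sInf_constrained (a c B w : ℝ) (ha : 0 < a) (hc : 0 < c) (hB : 0 < B)
    (hw : 0 ≤ w) (h : c * w ≤ a * B ^ 2) :
    sInf {y : ℝ | ∃ b : ℝ, B ≤ b ∧ y = c * w / b + a * b} = c * w / B + a * B := by
  apply le_antisymm
  · refine csInf_le ⟨0, ?_⟩ ⟨B, le_rfl, rfl⟩
    rintro y ⟨b, hb, rfl⟩
    have hb0 : 0 < b := hB.trans_le hb
    exact add_nonneg (div_nonneg (by positivity) hb0.le) (by positivity)
  · refine le_csInf ⟨c * w / B + a * B, B, le_rfl, rfl⟩ ?_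
    rintro y ⟨b, hb, rfl⟩
    have hb0 : 0 < b := hB.trans_le hb
    have key : c * w / b + a * b - (c * w / B + a * B) = (b - B) * (a * b * B - c * w) / (b * B) := by
      field_simp
      ring
    have h1 : 0 ≤ (b - B) * (a * b * B - c * w) := by
      apply mul_nonneg (by linarith)
      nlinarith [mul_nonneg (mul_pos ha hB).le (sub_nonneg.2 hb)]
    have h2 : 0 ≤ (b - B) * (a * b * B - c * w) / (b * B) := by positivity
    linarith [key ▸ h2]

lemma sInf_free (a c B w : ℝ) (ha : 0 < a) (hc : 0 < c) (hB : 0 < B)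
    (h : a * B ^ 2 ≤ c * w) :
    sInf {y : ℝ | ∃ b : ℝ, B ≤ b ∧ y = c * w / b + a * b} = 2 * Real.sqrt (a * c * w) := by
  have hw : 0 < w := by
    have hcw0 : 0 < c * w := lt_of_lt_of_le (by positivity) h
    rcases mul_pos_iff.mp hcw0 with ⟨_, h2⟩ | ⟨h1, _⟩
    · exact h2
    · linarith
  set b := Real.sqrt (c * w / a) with hbdef
  have hb0 : 0 < b := Real.sqrt_pos.2 (by positivity)
  have hb2 : b ^ 2 = c * w / a := Real.sq_sqrt (by positivity)
  have hcw : c * w = a * b ^ 2 := by rw [hb2]; field_simp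
  have hBb : B ≤ b := by
    have hle : B ^ 2 ≤ b ^ 2 := by rw [hb2, le_div_iff₀ ha]; nlinarith
    have := Real.sqrt_le_sqrt hle
    rwa [Real.sqrt_sq hB.le, Real.sqrt_sq hb0.le] at this
  have hval : c * w / b + a * b = 2 * Real.sqrt (a * c * w) := by
    have h1 : c * w / b = a * b := by rw [hcw]; field_simp
    have h2 : Real.sqrt (a * c * w) = a * b := by
      rw [show a * c * w = (a * b) ^ 2 by nlinarith]
      exact Real.sqrt_sq (by positivity)
    rw [h1, h2]; ring
  apply le_antisymm
  · refine csInf_le ⟨0, ?_⟩ ⟨b, hBb, hval.symm⟩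
    rintro y ⟨b', hb', rfl⟩
    have hb'0 : 0 < b' := hB.trans_le hb'
    exact add_nonneg (div_nonneg (by positivity) hb'0.le) (by positivity)
  · refine le_csInf ⟨c * w / B + a * B, B, le_rfl, rfl⟩ ?_
    rintro y ⟨b', hb', rfl⟩
    have hb'0 : 0 < b' := hB.trans_le hb'
    have hx : a * c * w ≤ ((c * w / b' + a * b') / 2) ^ 2 := by
      have hcb : a * c * w = (c * w / b') * (a * b') := by field_simp
      rw [hcb]
      nlinarith [sq_nonneg (c * w / b' - a * b')]
    have hsum : 0 ≤ c * w / b' + a * b' :=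
      add_nonneg (div_nonneg (by positivity) hb'0.le) (by positivity)
    have hs : Real.sqrt (a * c * w) ≤ (c * w / b' + a * b') / 2 := by
      calc Real.sqrt (a * c * w) ≤ Real.sqrt (((c * w / b' + a * b') / 2) ^ 2) :=
            Real.sqrt_le_sqrt hx
        _ = (c * w / b' + a * b') / 2 := Real.sqrt_sq (by positivity)
    linarith

section Ratio

variable (a₀ a₁ c₀ c₁ B : ℝ)

noncomputable def Rq (w : ℝ) : ℝ :=
  sInf {y : ℝ | ∃ b : ℝ, B ≤ b ∧ y = c₁ * w / b + a₁ * b}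
    / sInf {y : ℝ | ∃ b : ℝ, B ≤ b ∧ y = c₀ * w / b + a₀ * b}

variable (ha₀ : 0 < a₀) (ha : a₀ < a₁) (hc₁ : 0 < c₁) (hc : c₁ < c₀) (hB : 0 < B)

include ha₀ ha hc₁ hc hB

-- both in region 1 (constrained)
lemma ratio_anti1 (w w' : ℝ) (hw : 0 < w) (hww' : w ≤ w') (h1 : c₀ * w' ≤ a₀ * B ^ 2) :
    Rq a₀ a₁ c₀ c₁ B w' ≤ Rq a₀ a₁ c₀ c₁ B w := by
  have ha₁ : 0 < a₁ := ha₀.trans ha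
  have hc₀ : 0 < c₀ := hc₁.trans hc
  have hw' : 0 < w' := hw.trans_le hww'
  have h1w : c₀ * w ≤ a₀ * B ^ 2 := le_trans (by nlinarith) h1
  have h2 : c₁ * w' ≤ a₁ * B ^ 2 := by nlinarith
  have h2w : c₁ * w ≤ a₁ * B ^ 2 := le_trans (by nlinarith) h2
  unfold Rq
  rw [sInf_constrained a₁ c₁ B w ha₁ hc₁ hB hw.le h2w,
      sInf_constrained a₀ c₀ B w ha₀ hc₀ hB hw.le h1w,
      sInf_constrained a₁ c₁ B w' ha₁ hc₁ hB hw'.le h2,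
      sInf_constrained a₀ c₀ B w' ha₀ hc₀ hB hw'.le h1]
  rw [div_le_div_iff₀ (by positivity) (by positivity)]
  have hB2 : (0:ℝ) < B ^ 2 := by positivity
  have key : (c₁ * w / B + a₁ * B) * (c₀ * w' / B + a₀ * B)
      - (c₁ * w' / B + a₁ * B) * (c₀ * w / B + a₀ * B)
      = (w' - w) * (a₁ * c₀ - a₀ * c₁) := by field_simp; ring
  nlinarith [mul_nonneg (sub_nonneg.2 hww') (by nlinarith : (0:ℝ) ≤ a₁ * c₀ - a₀ * c₁)]

-- both in region 2
lemma ratio_anti2 (w w' : ℝ) (hww' : w ≤ w') (h1 : a₀ * B ^ 2 ≤ c₀ * w)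
    (h2 : c₁ * w' ≤ a₁ * B ^ 2) :
    Rq a₀ a₁ c₀ c₁ B w' ≤ Rq a₀ a₁ c₀ c₁ B w := by
  have ha₁ : 0 < a₁ := ha₀.trans ha
  have hc₀ : 0 < c₀ := hc₁.trans hc
  have hw : 0 < w := by
    have : 0 < c₀ * w := lt_of_lt_of_le (by positivity) h1
    rcases mul_pos_iff.mp this with ⟨_, h⟩ | ⟨h, _⟩
    · exact h
    · linarith
  have hw' : 0 < w' := hw.trans_le hww'
  have h1' : a₀ * B ^ 2 ≤ c₀ * w' := le_trans h1 (by nlinarith)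
  have h2w : c₁ * w ≤ a₁ * B ^ 2 := le_trans (by nlinarith) h2
  unfold Rq
  rw [sInf_constrained a₁ c₁ B w ha₁ hc₁ hB hw.le h2w,
      sInf_constrained a₁ c₁ B w' ha₁ hc₁ hB hw'.le h2,
      sInf_free a₀ c₀ B w ha₀ hc₀ hB h1,
      sInf_free a₀ c₀ B w' ha₀ hc₀ hB h1']
  have hs0 : (0:ℝ) < Real.sqrt (a₀ * c₀ * w) := Real.sqrt_pos.2 (by positivity)
  have hs0' : (0:ℝ) < Real.sqrt (a₀ * c₀ * w') := Real.sqrt_pos.2 (by positivity)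
  rw [div_le_div_iff₀ (by positivity) (by positivity)]
  set s := Real.sqrt w with hsdef
  set s' := Real.sqrt w' with hs'def
  have hs : 0 < s := Real.sqrt_pos.2 hw
  have hs' : 0 < s' := Real.sqrt_pos.2 hw'
  have hs2 : s ^ 2 = w := Real.sq_sqrt hw.le
  have hs'2 : s' ^ 2 = w' := Real.sq_sqrt hw'.le
  have hss' : s ≤ s' := Real.sqrt_le_sqrt hww'
  have hsq : Real.sqrt (a₀ * c₀ * w) = Real.sqrt (a₀ * c₀) * s := Real.sqrt_mul (by positivity) w
  have hsq' : Real.sqrt (a₀ * c₀ * w') = Real.sqrt (a₀ * c₀) * s' := Real.sqrt_mul (by positivity) w'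
  have ht : 0 < Real.sqrt (a₀ * c₀) := Real.sqrt_pos.2 (by positivity)
  rw [hsq, hsq']
  have hfact : c₁ * (s * s') ≤ a₁ * B ^ 2 := by
    have h3 : s * s' ≤ s' * s' := mul_le_mul_of_nonneg_right hss' hs'.le
    nlinarith
  have key : (c₁ * w' / B + a₁ * B) * s ≤ (c₁ * w / B + a₁ * B) * s' := by
    rw [← hs2, ← hs'2]
    rw [div_add' _ _ _ hB.ne', div_add' _ _ _ hB.ne', div_mul_eq_mul_div, div_mul_eq_mul_div,
        div_le_div_iff₀ hB hB]
    nlinarith [mul_nonneg (sub_nonneg.2 hss') (sub_nonneg.2 hfact)]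
  nlinarith [mul_le_mul_of_nonneg_left key (by positivity : (0:ℝ) ≤ 2 * Real.sqrt (a₀ * c₀))]

-- region 3: constant
lemma ratio_const (w : ℝ) (h : a₁ * B ^ 2 / c₁ ≤ w) :
    Rq a₀ a₁ c₀ c₁ B w = Real.sqrt (a₁ * c₁ / (a₀ * c₀)) := by
  have ha₁ : 0 < a₁ := ha₀.trans ha
  have hc₀ : 0 < c₀ := hc₁.trans hc
  have hw : 0 < w := lt_of_lt_of_le (by positivity) h
  have h2 : a₁ * B ^ 2 ≤ c₁ * w := by
    rw [div_le_iff₀ hc₁] at h; linarith [h]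
  have h1 : a₀ * B ^ 2 ≤ c₀ * w := by nlinarith
  unfold Rq
  rw [sInf_free a₁ c₁ B w ha₁ hc₁ hB h2, sInf_free a₀ c₀ B w ha₀ hc₀ hB h1]
  have hden : (0:ℝ) < Real.sqrt (a₀ * c₀ * w) := Real.sqrt_pos.2 (by positivity)
  rw [mul_div_mul_left _ _ (two_ne_zero), ← Real.sqrt_div (by positivity)]
  congr 1
  rw [mul_div_mul_right _ _ hw.ne']

end Ratio

section Ratio2

variable {a₀ a₁ c₀ c₁ B : ℝ}
variable (ha₀ : 0 < a₀) (ha : a₀ < a₁) (hc₁ : 0 < c₁) (hc : c₁ < c₀) (hB : 0 < B)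

include ha₀ ha hc₁ hc hB

lemma ratio_anti12 (w w' : ℝ) (hw : 0 < w) (hww' : w ≤ w')
    (h2 : c₁ * w' ≤ a₁ * B ^ 2) :
    Rq a₀ a₁ c₀ c₁ B w' ≤ Rq a₀ a₁ c₀ c₁ B w := by
  have hc₀ : 0 < c₀ := hc₁.trans hc
  have hw' : 0 < w' := hw.trans_le hww'
  rcases le_or_gt (c₀ * w') (a₀ * B ^ 2) with h1 | h1
  · exact ratio_anti1 a₀ a₁ c₀ c₁ B ha₀ ha hc₁ hc hB w w' hw hww' h1
  · rcases le_or_gt (a₀ * B ^ 2) (c₀ * w) with h3 | h3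
    · exact ratio_anti2 a₀ a₁ c₀ c₁ B ha₀ ha hc₁ hc hB w w' hww' h3 h2
    · set u := a₀ * B ^ 2 / c₀ with hu
      have hcu : c₀ * u = a₀ * B ^ 2 := by rw [hu]; field_simp
      have hwu : w ≤ u := by rw [hu, le_div_iff₀ hc₀]; linarith
      have huw' : u ≤ w' := by rw [hu, div_le_iff₀ hc₀]; nlinarith
      have hA : Rq a₀ a₁ c₀ c₁ B w' ≤ Rq a₀ a₁ c₀ c₁ B u :=
        ratio_anti2 a₀ a₁ c₀ c₁ B ha₀ ha hc₁ hc hB u w' huw' hcu.ge h2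
      have hBB : Rq a₀ a₁ c₀ c₁ B u ≤ Rq a₀ a₁ c₀ c₁ B w :=
        ratio_anti1 a₀ a₁ c₀ c₁ B ha₀ ha hc₁ hc hB w u hw hwu hcu.le
      exact hA.trans hBB

lemma ratio_anti_full (w w' : ℝ) (hw : 0 < w) (hww' : w ≤ w') :
    Rq a₀ a₁ c₀ c₁ B w' ≤ Rq a₀ a₁ c₀ c₁ B w := by
  have ha₁ : 0 < a₁ := ha₀.trans ha
  have hc₀ : 0 < c₀ := hc₁.trans hc
  have hw' : 0 < w' := hw.trans_le hww'
  rcases le_or_gt (c₁ * w') (a₁ * B ^ 2) with h2 | h2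
  · exact ratio_anti12 ha₀ ha hc₁ hc hB w w' hw hww' h2
  · rw [ratio_const a₀ a₁ c₀ c₁ B ha₀ ha hc₁ hc hB w' (by rw [div_le_iff₀ hc₁]; nlinarith)]
    rcases le_or_gt (c₁ * w) (a₁ * B ^ 2) with h4 | h4
    · set v := a₁ * B ^ 2 / c₁ with hv
      have hcv : c₁ * v = a₁ * B ^ 2 := by rw [hv]; field_simp
      have hwv : w ≤ v := by rw [hv, le_div_iff₀ hc₁]; linarith
      rw [← ratio_const a₀ a₁ c₀ c₁ B ha₀ ha hc₁ hc hB v le_rfl]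
      exact ratio_anti12 ha₀ ha hc₁ hc hB w v hw hwv hcv.le
    · rw [ratio_const a₀ a₁ c₀ c₁ B ha₀ ha hc₁ hc hB w (by rw [div_le_iff₀ hc₁]; nlinarith)]

end Ratio2

/-- Monotonicity of the ratio of reduced endpoint costs: for `0 < a₀ < a₁`,
`0 < c₁ < c₀`, `B > 0`, with `Φᵢ(w) = min_{b ≥ B} (cᵢ w / b + aᵢ b)`, the ratio
`R(w) = Φ₁(w)/Φ₀(w)` is nonincreasing on `(0,∞)`, tends to `a₁/a₀ > 1` as `w → 0⁺`,
tends to `√(a₁c₁/(a₀c₀))` as `w → ∞`, and is constant equal to `√(a₁c₁/(a₀c₀))`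
on `[a₁B²/c₁, ∞)`. -/
theorem stmt_13 (a₀ a₁ c₀ c₁ B : ℝ) (ha₀ : 0 < a₀) (ha : a₀ < a₁)
    (hc₁ : 0 < c₁) (hc : c₁ < c₀) (hB : 0 < B) :
    AntitoneOn
      (fun w : ℝ => sInf {y : ℝ | ∃ b : ℝ, B ≤ b ∧ y = c₁ * w / b + a₁ * b}
        / sInf {y : ℝ | ∃ b : ℝ, B ≤ b ∧ y = c₀ * w / b + a₀ * b})
      (Set.Ioi (0 : ℝ)) ∧
    Tendsto
      (fun w : ℝ => sInf {y : ℝ | ∃ b : ℝ, B ≤ b ∧ y = c₁ * w / b + a₁ * b}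
        / sInf {y : ℝ | ∃ b : ℝ, B ≤ b ∧ y = c₀ * w / b + a₀ * b})
      (nhdsWithin 0 (Set.Ioi 0)) (nhds (a₁ / a₀)) ∧
    1 < a₁ / a₀ ∧
    Tendsto
      (fun w : ℝ => sInf {y : ℝ | ∃ b : ℝ, B ≤ b ∧ y = c₁ * w / b + a₁ * b}
        / sInf {y : ℝ | ∃ b : ℝ, B ≤ b ∧ y = c₀ * w / b + a₀ * b})
      atTop (nhds (Real.sqrt (a₁ * c₁ / (a₀ * c₀)))) ∧
    ∀ w : ℝ, a₁ * B ^ 2 / c₁ ≤ w →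
      sInf {y : ℝ | ∃ b : ℝ, B ≤ b ∧ y = c₁ * w / b + a₁ * b}
        / sInf {y : ℝ | ∃ b : ℝ, B ≤ b ∧ y = c₀ * w / b + a₀ * b}
        = Real.sqrt (a₁ * c₁ / (a₀ * c₀)) := by
  have ha₁ : 0 < a₁ := ha₀.trans ha
  have hc₀ : 0 < c₀ := hc₁.trans hc
  refine ⟨?_, ?_, ?_, ?_, ?_⟩
  · intro w hw w' hw' hle
    exact ratio_anti_full ha₀ ha hc₁ hc hB w w' hw hle
  · -- limit at 0⁺
    have hW0 : (0:ℝ) < a₀ * B ^ 2 / c₀ := by positivity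
    have hev : (fun w : ℝ => (c₁ * w / B + a₁ * B) / (c₀ * w / B + a₀ * B))
        =ᶠ[nhdsWithin 0 (Set.Ioi 0)] (Rq a₀ a₁ c₀ c₁ B) := by
      filter_upwards [Ioo_mem_nhdsGT_of_mem (by constructor <;> simp [hW0] : (0:ℝ) ∈ Set.Ico 0 (a₀ * B ^ 2 / c₀))] with w hw
      obtain ⟨hw0, hwlt⟩ := hw
      have h1 : c₀ * w ≤ a₀ * B ^ 2 := by
        have := (le_div_iff₀ hc₀).1 hwlt.le
        linarith
      have h2 : c₁ * w ≤ a₁ * B ^ 2 := by nlinarith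
      unfold Rq
      rw [sInf_constrained a₁ c₁ B w ha₁ hc₁ hB hw0.le h2,
          sInf_constrained a₀ c₀ B w ha₀ hc₀ hB hw0.le h1]
    have hval : (c₁ * 0 / B + a₁ * B) / (c₀ * 0 / B + a₀ * B) = a₁ / a₀ := by
      simp only [mul_zero, zero_div, zero_add]; rw [mul_div_mul_right _ _ hB.ne']
    have hcont : Tendsto (fun w : ℝ => (c₁ * w / B + a₁ * B) / (c₀ * w / B + a₀ * B))
        (nhds 0) (nhds (a₁ / a₀)) := by
      rw [← hval]
      apply Filter.Tendsto.div
      · exact (((continuous_const.mul continuous_id).div_const B).add continuous_const).tendsto 0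
      · exact (((continuous_const.mul continuous_id).div_const B).add continuous_const).tendsto 0
      · rw [mul_zero, zero_div, zero_add]; positivity
    exact Filter.Tendsto.congr' hev (hcont.mono_left nhdsWithin_le_nhds)
  · exact (one_lt_div ha₀).2 ha
  · -- limit at atTop
    have hev : (Rq a₀ a₁ c₀ c₁ B) =ᶠ[atTop]
        (fun _ : ℝ => Real.sqrt (a₁ * c₁ / (a₀ * c₀))) := by
      filter_upwards [eventually_ge_atTop (a₁ * B ^ 2 / c₁)] with w hw
      exact ratio_const a₀ a₁ c₀ c₁ B ha₀ ha hc₁ hc hB w hw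
    exact Filter.Tendsto.congr' hev.symm tendsto_const_nhds
  · intro w hw
    exact ratio_const a₀ a₁ c₀ c₁ B ha₀ ha hc₁ hc hB w hw
end
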